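/- Let φ ∈ L^∞(𝕋ⁿ). If the Hankel operator H_{φ,△ₙ} is compact, then H_{φ,△ₙ} = 0. In other words, the zero operator is the only compact Hankel operator on H²(∂_d△ₙ). -/

import Mathlib

open MeasureTheory Filter Topology ComplexConjugate

noncomputable section

instance fact_one_pos : Fact ((0:ℝ) < 1) := ⟨one_pos⟩

abbrev Torus (n : ℕ) := Fin n → AddCircle (1 : ℝ)

abbrev L2T (n : ℕ) := Lp ℂ 2 (volume : Measure (Torus n))

abbrev LinfT (n : ℕ) := Lp ℂ ⊤ (volume : Measure (Torus n))

def char {n : ℕ} (α : Fin n → ℤ) : Torus n → ℂ := fun x => ∏ j, fourier (α j) (x j)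

lemma char_continuous {n : ℕ} (α : Fin n → ℤ) : Continuous (char α) :=
  continuous_finset_prod _ fun j _ => (fourier (α j)).continuous.comp (continuous_apply j)

lemma char_memLp {n : ℕ} (α : Fin n → ℤ) (p : ENNReal) :
    MemLp (char α) p (volume : Measure (Torus n)) := by
  refine (memLp_top_of_bound ((char_continuous α).aestronglyMeasurable) 1 ?_).mono_exponent le_top
  filter_upwards with x
  simp only [char, norm_prod]
  calc ∏ j, ‖fourier (α j) (x j)‖
      = ∏ j : Fin n, (1:ℝ) := by
        refine Finset.prod_congr rfl fun j _ => ?_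
        rw [fourier_apply]; exact Circle.norm_coe _
    _ ≤ 1 := by simp

def charL2 {n : ℕ} (α : Fin n → ℤ) : L2T n := (char_memLp α 2).toLp (char α)

def hardyT (n : ℕ) : Submodule ℂ (L2T n) :=
  (Submodule.span ℂ
    (charL2 '' {α : Fin n → ℤ | ∀ k : Fin n, 0 ≤ (∑ j ∈ Finset.Iic k, α j) + (k.val : ℤ)})).topologicalClosure

def hardyD (n : ℕ) : Submodule ℂ (L2T n) :=
  (Submodule.span ℂ (charL2 '' {α : Fin n → ℤ | ∀ j, 0 ≤ α j})).topologicalClosure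

instance hardyT.completeSpace (n : ℕ) : CompleteSpace (hardyT n) :=
  (Submodule.isClosed_topologicalClosure _).completeSpace_coe

instance hardyD.completeSpace (n : ℕ) : CompleteSpace (hardyD n) :=
  (Submodule.isClosed_topologicalClosure _).completeSpace_coe

def IsToeplitzOn {n : ℕ} (K : Submodule ℂ (L2T n)) (φ : Torus n → ℂ) (T : K →L[ℂ] K) : Prop :=
  ∀ f g : K,
    (inner ℂ ((g : L2T n)) ((T f : L2T n)) : ℂ) =
      ∫ x, conj ((g : L2T n) x) * (φ x * (f : L2T n) x) ∂volume

def IsCoordMult {n : ℕ} (j : Fin n) (M : hardyT n →L[ℂ] hardyT n) : Prop :=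
  ∀ f : hardyT n,
    ((M f : L2T n) : Torus n → ℂ) =ᵐ[volume]
      fun x => fourier 1 (x j) * ((f : L2T n) : Torus n → ℂ) x

def IsHankelT {n : ℕ} (φ : Torus n → ℂ) (H : hardyT n →L[ℂ] L2T n) : Prop :=
  (∀ f : hardyT n, H f ∈ (hardyT n)ᗮ) ∧
    ∀ f : hardyT n, ∀ g : L2T n, g ∈ (hardyT n)ᗮ →
      (inner ℂ g (H f) : ℂ) = ∫ x, conj (g x) * (φ x * (f : L2T n) x) ∂volume

def IsAnalyticSymbolF {n : ℕ} (φ : Torus n → ℂ) : Prop :=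
  ∀ α : Fin n → ℤ, (¬ ∀ k : Fin n, 0 ≤ ∑ j ∈ Finset.Iic k, α j) →
    ∫ x, φ x * char (-α) x ∂(volume : Measure (Torus n)) = 0

def IsInnerSymbolF {n : ℕ} (φ : Torus n → ℂ) : Prop :=
  IsAnalyticSymbolF φ ∧ ∀ᵐ x ∂(volume : Measure (Torus n)), ‖φ x‖ = 1

def tauMap {n : ℕ} (x : Torus n) : Torus n := fun j => ∑ k ∈ Finset.Ici j, x k

def sigmaMap {n : ℕ} (x : Torus n) : Torus n :=
  fun j => if h : (j : ℕ) + 1 < n then x j - x ⟨(j : ℕ) + 1, h⟩ else x j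

def jacF {n : ℕ} (x : Torus n) : ℂ := ∏ j : Fin n, fourier (j.val : ℤ) (x j)

def jacInvF {n : ℕ} (x : Torus n) : ℂ :=
  ∏ j : Fin n, fourier (if j.val = 0 then (0 : ℤ) else -1) (x j)

lemma int_fourier (m : ℤ) : ∫ x : AddCircle (1:ℝ), fourier m x = if m = 0 then 1 else 0 := by
  have hv : (volume : Measure (AddCircle (1:ℝ))) = (AddCircle.haarAddCircle) := by
    rw [AddCircle.volume_eq_smul_haarAddCircle]; simp
  rw [hv]
  split_ifs with h
  · subst h
    simp only [fourier_zero]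
    simp [measure_univ]
  · exact integral_eq_zero_of_add_right_eq_neg (fourier_add_half_inv_index h one_pos)

lemma int_char {n : ℕ} (α : Fin n → ℤ) :
    ∫ x : Torus n, char α x = if α = 0 then 1 else 0 := by
  have := MeasureTheory.integral_fintype_prod_eq_prod (𝕜 := ℂ) (ι := Fin n) (μ := fun _ => volume)
    (fun j (t : AddCircle (1:ℝ)) => fourier (α j) t)
  simp only [char]
  rw [MeasureTheory.volume_pi, this]
  simp_rw [int_fourier]
  by_cases h : α = 0
  · subst h; simp
  · rw [if_neg h]
    obtain ⟨j, hj⟩ : ∃ j, α j ≠ 0 := by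
      by_contra hc; push_neg at hc; exact h (funext hc)
    exact Finset.prod_eq_zero (Finset.mem_univ j) (by rw [if_neg hj])

lemma char_add {n : ℕ} (α β : Fin n → ℤ) : char (α + β) = char α * char β := by
  funext x
  simp only [char, Pi.mul_apply, Pi.add_apply, fourier_add, ← Finset.prod_mul_distrib]

lemma char_conj {n : ℕ} (α : Fin n → ℤ) (x : Torus n) :
    conj (char α x) = char (-α) x := by
  simp only [char, map_prod, Pi.neg_apply, fourier_neg]

lemma inner_charL2 {n : ℕ} (α β : Fin n → ℤ) :
    (inner ℂ (charL2 α) (charL2 β) : ℂ) = if α = β then 1 else 0 := by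
  rw [MeasureTheory.L2.inner_def]
  have h1 : ∀ᵐ x ∂(volume : Measure (Torus n)),
      (inner ℂ ((charL2 α : L2T n) x) ((charL2 β : L2T n) x) : ℂ) = char (β - α) x := by
    filter_upwards [MemLp.coeFn_toLp (char_memLp α 2), MemLp.coeFn_toLp (char_memLp β 2)]
      with x hx hy
    simp only [charL2] at *
    rw [hx, hy, RCLike.inner_apply, char_conj]
    rw [show β - α = -α + β by ring, char_add]; exact mul_comm _ _
  rw [integral_congr_ae h1, int_char]
  by_cases h : α = β
  · subst h; simp
  · rw [if_neg h, if_neg (fun hc => h (sub_eq_zero.mp hc).symm)]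

def charC {n : ℕ} (α : Fin n → ℤ) : C(Torus n, ℂ) := ⟨char α, char_continuous α⟩

def torusSubalgebra (n : ℕ) : StarSubalgebra ℂ C(Torus n, ℂ) where
  toSubalgebra := Algebra.adjoin ℂ (Set.range charC)
  star_mem' := by
    show Algebra.adjoin ℂ (Set.range (charC (n := n))) ≤
      star (Algebra.adjoin ℂ (Set.range (charC (n := n))))
    refine Algebra.adjoin_le ?_
    rintro - ⟨α, rfl⟩
    refine Algebra.subset_adjoin ⟨-α, ?_⟩
    ext x
    exact (char_conj α x).symm

lemma torusSubalgebra_coe (n : ℕ) :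
    Subalgebra.toSubmodule (torusSubalgebra n).toSubalgebra
      = Submodule.span ℂ (Set.range (charC (n := n))) := by
  apply Algebra.adjoin_eq_span_of_subset
  refine Set.Subset.trans ?_ Submodule.subset_span
  intro x hx
  refine Submonoid.closure_induction (fun _ => id) ⟨0, ?_⟩ ?_ hx
  · ext1 z; simp [charC, char]
  · rintro - - - - ⟨a, rfl⟩ ⟨b, rfl⟩
    exact ⟨a + b, by ext1 z; exact congrFun (char_add a b) z⟩

lemma torusSubalgebra_separatesPoints (n : ℕ) : (torusSubalgebra n).SeparatesPoints := by
  intro x y hxy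
  obtain ⟨j, hj⟩ : ∃ j, x j ≠ y j := by
    by_contra hc; push_neg at hc; exact hxy (funext hc)
  refine ⟨_, ⟨charC (Pi.single j 1), Algebra.subset_adjoin ⟨_, rfl⟩, rfl⟩, ?_⟩
  have hval : ∀ z : Torus n, charC (n := n) (Pi.single j 1) z = fourier 1 (z j) := by
    intro z
    simp only [charC, ContinuousMap.coe_mk, char]
    rw [Finset.prod_eq_single j]
    · rw [Pi.single_eq_same]
    · intro b _ hb; rw [Pi.single_eq_of_ne hb, fourier_zero]
    · simp
  dsimp only
  rw [hval, hval, fourier_one, fourier_one]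
  intro hc
  rw [Circle.coe_inj] at hc
  exact hj (AddCircle.injective_toCircle one_ne_zero hc)

lemma span_charC_closure_eq_top (n : ℕ) :
    (Submodule.span ℂ (Set.range (charC (n := n)))).topologicalClosure = ⊤ := by
  rw [← torusSubalgebra_coe]
  exact congr_arg (Subalgebra.toSubmodule <| StarSubalgebra.toSubalgebra ·)
    (ContinuousMap.starSubalgebra_topologicalClosure_eq_top_of_separatesPoints _
      (torusSubalgebra_separatesPoints n))

lemma span_charL2_closure_eq_top (n : ℕ) :
    (Submodule.span ℂ (Set.range (charL2 (n := n)))).topologicalClosure = ⊤ := by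
  convert (ContinuousMap.toLp_denseRange (𝕜 := ℂ) (E := ℂ) (μ := (volume : Measure (Torus n)))
    (p := 2) (by norm_num : (2:ENNReal) ≠ ⊤)).topologicalClosure_map_submodule
      (span_charC_closure_eq_top n)
  case e'_3 => rfl
  have hfun : ∀ α : Fin n → ℤ,
      (ContinuousMap.toLp (E := ℂ) 2 (volume : Measure (Torus n)) ℂ) (charC α) = charL2 α := by
    intro α
    refine MeasureTheory.Lp.ext ?_
    filter_upwards [MemLp.coeFn_toLp (char_memLp α 2),
      ContinuousMap.coeFn_toLp (μ := (volume : Measure (Torus n))) (𝕜 := ℂ) (p := 2) (charC α)]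
      with x h1 h2
    exact h2.trans h1.symm
  rw [Submodule.map_span, ← Set.range_comp]
  have : (⇑(ContinuousMap.toLp (E := ℂ) 2 (volume : Measure (Torus n)) ℂ) ∘ charC) = charL2 :=
    funext hfun
  simp only [ContinuousLinearMap.coe_coe]
  rw [this]

lemma eq_zero_of_inner_char_eq_zero {n : ℕ} (g : L2T n)
    (hg : ∀ α : Fin n → ℤ, (inner ℂ (charL2 α) g : ℂ) = 0) : g = 0 := by
  have h1 : g ∈ (Submodule.span ℂ (Set.range (charL2 (n := n))))ᗮ := by
    rw [Submodule.mem_orthogonal]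
    intro u hu
    induction hu using Submodule.span_induction with
    | mem x hx => obtain ⟨α, rfl⟩ := hx; exact hg α
    | zero => simp
    | add x y _ _ hx hy => rw [inner_add_left, hx, hy, add_zero]
    | smul c x _ hx => rw [inner_smul_left, hx, mul_zero]
  have h2 : g ∈ (Submodule.span ℂ (Set.range (charL2 (n := n))))ᗮᗮ := by
    rw [Submodule.orthogonal_orthogonal_eq_closure, span_charL2_closure_eq_top]
    trivial
  have := Submodule.inner_left_of_mem_orthogonal (K := (Submodule.span ℂ (Set.range (charL2 (n := n))))ᗮ) h1 h2
  rwa [inner_self_eq_zero] at this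

lemma sum_Iic_single {n : ℕ} (j0 k : Fin n) :
    ∑ j ∈ Finset.Iic k, Pi.single j0 (1:ℤ) j = if j0 ≤ k then 1 else 0 := by
  simp [Pi.single_apply, Finset.sum_ite_eq', Finset.mem_Iic]

def Ple {n : ℕ} (α : Fin n → ℤ) : Prop :=
  ∀ k : Fin n, 0 ≤ (∑ j ∈ Finset.Iic k, α j) + (k.val : ℤ)

lemma sum_Iic_add_smul {n : ℕ} (γ β : Fin n → ℤ) (m : ℤ) (k : Fin n) :
    ∑ j ∈ Finset.Iic k, (γ + m • β) j
      = (∑ j ∈ Finset.Iic k, γ j) + m * ∑ j ∈ Finset.Iic k, β j := by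
  simp only [Pi.add_apply, Pi.smul_apply, smul_eq_mul]
  rw [Finset.sum_add_distrib, Finset.mul_sum]

lemma exists_good_direction {n : ℕ} (hn : 2 ≤ n) {γ : Fin n → ℤ} (hγ : ¬ Ple γ) :
    ∃ β : Fin n → ℤ, β ≠ 0 ∧ (∀ k : Fin n, 0 ≤ ∑ j ∈ Finset.Iic k, β j) ∧
      (∀ m : ℕ, ¬ Ple (γ + (m : ℤ) • β)) := by
  rw [Ple] at hγ; push_neg at hγ
  obtain ⟨k₀, hk₀⟩ := hγ
  have hn0 : 0 < n := by omega
  -- candidate direction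
  set j1 : Fin n := ⟨1 % n, Nat.mod_lt _ hn0⟩ with hj1
  have hj1v : (j1 : ℕ) = 1 := Nat.mod_eq_of_lt (by omega)
  by_cases h0 : (k₀ : ℕ) = 0
  · refine ⟨Pi.single j1 1, ?_, ?_, ?_⟩
    · intro hc
      have := congrFun hc j1
      rw [Pi.single_eq_same] at this
      exact one_ne_zero this
    · intro k; rw [sum_Iic_single]; split_ifs <;> norm_num
    · intro m hPle
      have := hPle k₀
      rw [sum_Iic_add_smul, sum_Iic_single, if_neg (by rw [Fin.le_def]; omega),
        mul_zero, add_zero] at this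
      omega
  · refine ⟨Pi.single ⟨0, hn0⟩ 1 - Pi.single k₀ 1, ?_, ?_, ?_⟩
    · intro hc
      have := congrFun hc ⟨0, hn0⟩
      rw [Pi.sub_apply, Pi.single_eq_same, Pi.single_eq_of_ne (by
        intro h; exact h0 (by rw [← h]) ) 1, sub_zero] at this
      exact one_ne_zero this
    · intro k
      simp only [Pi.sub_apply]
      rw [Finset.sum_sub_distrib, sum_Iic_single, sum_Iic_single,
        if_pos (by simp [Fin.le_def])]
      split_ifs <;> omega
    · intro m hPle
      have := hPle k₀
      rw [sum_Iic_add_smul] at this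
      simp only [Pi.sub_apply] at this
      rw [Finset.sum_sub_distrib, sum_Iic_single, sum_Iic_single,
        if_pos (by simp [Fin.le_def]), if_pos le_rfl] at this
      omega

lemma norm_charL2 {n : ℕ} (α : Fin n → ℤ) : ‖charL2 (n := n) α‖ = 1 := by
  have h := inner_charL2 α α
  rw [if_pos rfl] at h
  rw [inner_self_eq_norm_sq_to_K (𝕜 := ℂ)] at h
  have h2 : (‖charL2 (n := n) α‖:ℝ)^2 = 1 := by
    have h3 : ((‖charL2 (n := n) α‖^2 : ℝ) : ℂ) = 1 := by push_cast; exact h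
    exact_mod_cast h3
  nlinarith [norm_nonneg (charL2 (n := n) α)]

lemma charL2_mem_hardyT {n : ℕ} {α : Fin n → ℤ} (hα : Ple α) : charL2 α ∈ hardyT n :=
  Submodule.le_topologicalClosure _ (Submodule.subset_span ⟨α, hα, rfl⟩)

lemma charL2_mem_orth {n : ℕ} {γ : Fin n → ℤ} (hγ : ¬ Ple γ) : charL2 γ ∈ (hardyT n)ᗮ := by
  have h1 : charL2 γ ∈ (Submodule.span ℂ
      (charL2 '' {α : Fin n → ℤ | ∀ k : Fin n, 0 ≤ (∑ j ∈ Finset.Iic k, α j) + (k.val : ℤ)}))ᗮ := by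
    rw [Submodule.mem_orthogonal]
    intro u hu
    induction hu using Submodule.span_induction with
    | mem x hx =>
        obtain ⟨α, hα, rfl⟩ := hx
        rw [inner_charL2]
        refine if_neg (fun h => hγ ?_)
        exact h ▸ hα
    | zero => simp
    | add x y _ _ hx hy => rw [inner_add_left, hx, hy, add_zero]
    | smul c x _ hx => rw [inner_smul_left, hx, mul_zero]
  rw [hardyT, ← Submodule.orthogonal_orthogonal_eq_closure]
  exact Submodule.le_orthogonal_orthogonal _ h1

lemma orthonormal_seq {n : ℕ} (γ β : Fin n → ℤ) (hβ : β ≠ 0) :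
    Orthonormal ℂ (fun m : ℕ => charL2 (γ + (m:ℤ) • β)) := by
  obtain ⟨j0, hj0⟩ : ∃ j0, β j0 ≠ 0 := by
    by_contra hc; push_neg at hc; exact hβ (funext hc)
  have key : ∀ i j : ℕ, (γ + (i:ℤ) • β = γ + (j:ℤ) • β) → i = j := by
    intro i j h
    have h2 := congrFun h j0
    simp only [Pi.add_apply, Pi.smul_apply, smul_eq_mul, add_right_inj] at h2
    exact_mod_cast mul_right_cancel₀ hj0 h2
  rw [orthonormal_iff_ite]
  intro i j
  rw [inner_charL2]
  by_cases h : i = j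
  · subst h; simp
  · rw [if_neg (fun hc => h (key i j hc)), if_neg h]

lemma inner_tendsto_zero {n : ℕ} (v : ℕ → L2T n) (hv : Orthonormal ℂ v) (x : L2T n) :
    Tendsto (fun m => ‖(inner ℂ (v m) x : ℂ)‖) atTop (𝓝 0) := by
  have hsum := hv.inner_products_summable (x := x)
  have h0 := hsum.tendsto_atTop_zero
  have h1 := (Real.continuous_sqrt.tendsto 0).comp h0
  rw [Real.sqrt_zero] at h1
  convert h1 using 2 with m
  simp only [Function.comp_apply]
  rw [Real.sqrt_sq (norm_nonneg _)]

lemma Ple_add_smul {n : ℕ} {α β : Fin n → ℤ} (hα : Ple α)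
    (hβ : ∀ k : Fin n, 0 ≤ ∑ j ∈ Finset.Iic k, β j) (m : ℕ) : Ple (α + (m:ℤ) • β) := by
  intro k
  rw [sum_Iic_add_smul]
  have := hα k
  have h2 : 0 ≤ (m:ℤ) * ∑ j ∈ Finset.Iic k, β j := mul_nonneg (Int.natCast_nonneg m) (hβ k)
  omega

lemma char_cancel {n : ℕ} (δ : Fin n → ℤ) (x : Torus n) :
    conj (char δ x) * char δ x = 1 := by
  rw [char_conj, ← Pi.mul_apply, ← char_add, neg_add_cancel]
  simp [char]

/-- key vanishing of the symbol coefficients -/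
lemma int_vanish {n : ℕ} (hn : 2 ≤ n) (φ : LinfT n)
    (H : hardyT n →L[ℂ] L2T n) (hH : IsHankelT (⇑φ) H)
    (hcpt : IsCompactOperator H) {γ α : Fin n → ℤ} (hγ : ¬ Ple γ) (hα : Ple α) :
    ∫ x, conj (char γ x) * (φ x * char α x) ∂(volume : Measure (Torus n)) = 0 := by
  obtain ⟨β, hβne, hβpre, hγm⟩ := exists_good_direction hn hγ
  set c : ℂ := ∫ x, conj (char γ x) * (φ x * char α x) ∂(volume : Measure (Torus n)) with hc
  -- the sequences
  set e : ℕ → L2T n := fun m => charL2 (γ + (m:ℤ) • β) with he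
  set F : ℕ → hardyT n := fun m =>
    ⟨charL2 (α + (m:ℤ) • β), charL2_mem_hardyT (Ple_add_smul hα hβpre m)⟩ with hF
  -- identity : inner ℂ (e m) (H (F m)) = c
  have hid : ∀ m : ℕ, (inner ℂ (e m) (H (F m)) : ℂ) = c := by
    intro m
    rw [hH.2 (F m) (e m) (charL2_mem_orth (hγm m))]
    refine integral_congr_ae ?_
    have h1 := MemLp.coeFn_toLp (char_memLp (γ + (m:ℤ) • β) 2)
    have h2 := MemLp.coeFn_toLp (char_memLp (α + (m:ℤ) • β) 2)
    filter_upwards [h1, h2] with x hx1 hx2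
    have hex : ((e m : L2T n) : Torus n → ℂ) x = char (γ + (m:ℤ) • β) x := hx1
    have hfx : (((F m : hardyT n) : L2T n) : Torus n → ℂ) x = char (α + (m:ℤ) • β) x := hx2
    rw [hex, hfx]
    have eg : char (γ + (m:ℤ) • β) x = char γ x * char ((m:ℤ) • β) x :=
      congrFun (char_add γ ((m:ℤ) • β)) x
    have ea : char (α + (m:ℤ) • β) x = char α x * char ((m:ℤ) • β) x :=
      congrFun (char_add α ((m:ℤ) • β)) x
    rw [eg, ea, map_mul]
    have hd := char_cancel ((m:ℤ) • β) x
    calc conj (char γ x) * conj (char ((m:ℤ) • β) x) * (φ x * (char α x * char ((m:ℤ) • β) x))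
        = conj (char γ x) * (φ x * char α x)
            * (conj (char ((m:ℤ) • β) x) * char ((m:ℤ) • β) x) := by ring
      _ = conj (char γ x) * (φ x * char α x) := by rw [hd, mul_one]
  -- compactness
  obtain ⟨K, hK, hHK⟩ := IsCompactOperator.image_closedBall_subset_compact (𝕜₁ := ℂ)
    (f := (H : hardyT n →ₗ[ℂ] L2T n)) (by rwa [ContinuousLinearMap.coe_coe]) 1
  have hyK : ∀ m : ℕ, H (F m) ∈ K := by
    intro m
    refine hHK ⟨F m, ?_, rfl⟩
    rw [Metric.mem_closedBall, dist_zero_right]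
    have : ‖F m‖ = ‖charL2 (α + (m:ℤ) • β)‖ := rfl
    rw [this, norm_charL2]
  obtain ⟨a, _, ψs, hmono, hlim⟩ := hK.tendsto_subseq hyK
  -- limits
  have hbessel : Tendsto (fun m => ‖(inner ℂ (e m) a : ℂ)‖) atTop (𝓝 0) :=
    inner_tendsto_zero e (orthonormal_seq γ β hβne) a
  have hb2 : Tendsto (fun k => ‖(inner ℂ (e (ψs k)) a : ℂ)‖) atTop (𝓝 0) :=
    hbessel.comp hmono.tendsto_atTop
  have hdiff : Tendsto (fun k => ‖H (F (ψs k)) - a‖) atTop (𝓝 0) := by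
    rw [← tendsto_iff_norm_sub_tendsto_zero]
    exact hlim
  have hsum : Tendsto (fun k => ‖H (F (ψs k)) - a‖ + ‖(inner ℂ (e (ψs k)) a : ℂ)‖)
      atTop (𝓝 0) := by
    simpa using hdiff.add hb2
  have hbound : ∀ k : ℕ, ‖c‖ ≤ ‖H (F (ψs k)) - a‖ + ‖(inner ℂ (e (ψs k)) a : ℂ)‖ := by
    intro k
    have h1 : c = inner ℂ (e (ψs k)) (H (F (ψs k)) - a) + inner ℂ (e (ψs k)) a := by
      rw [inner_sub_right]; rw [← hid (ψs k)]; ring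
    rw [h1]
    refine (norm_add_le _ _).trans ?_
    gcongr
    calc ‖(inner ℂ (e (ψs k)) (H (F (ψs k)) - a) : ℂ)‖
        ≤ ‖e (ψs k)‖ * ‖H (F (ψs k)) - a‖ := norm_inner_le_norm _ _
      _ = ‖H (F (ψs k)) - a‖ := by rw [he]; rw [norm_charL2, one_mul]
  have : ‖c‖ ≤ 0 := le_of_tendsto_of_tendsto' tendsto_const_nhds hsum hbound
  simpa [hc] using norm_le_zero_iff.mp this

theorem stmt15' {n : ℕ} (hn : 2 ≤ n) (φ : LinfT n)
    (H : hardyT n →L[ℂ] L2T n) (hH : IsHankelT (⇑φ) H)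
    (hcpt : IsCompactOperator H) : H = 0 := by
  -- step 1 : inner ℂ (charL2 γ) (H f) = 0 for all f and all γ with ¬ Ple γ
  have main2 : ∀ γ : Fin n → ℤ, ¬ Ple γ → ∀ f : hardyT n,
      (inner ℂ (charL2 γ) (H f) : ℂ) = 0 := by
    intro γ hγ
    set ψ : hardyT n →L[ℂ] ℂ := (innerSL ℂ (charL2 γ)).comp H with hψ
    have hvanish : ∀ (v : L2T n) (hv : v ∈ Submodule.span ℂ
        (charL2 '' {α : Fin n → ℤ | ∀ k : Fin n,
          0 ≤ (∑ j ∈ Finset.Iic k, α j) + (k.val : ℤ)}))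
        (hmem : v ∈ hardyT n), ψ ⟨v, hmem⟩ = 0 := by
      intro v hv
      induction hv using Submodule.span_induction with
      | mem x hx =>
          intro hmem
          obtain ⟨α, hα, rfl⟩ := hx
          have : ψ ⟨charL2 α, hmem⟩ = inner ℂ (charL2 γ) (H ⟨charL2 α, hmem⟩) := rfl
          rw [this, hH.2 ⟨charL2 α, hmem⟩ (charL2 γ) (charL2_mem_orth hγ)]
          have hcoe := MemLp.coeFn_toLp (char_memLp γ 2)
          have hcoe2 := MemLp.coeFn_toLp (char_memLp α 2)
          rw [← int_vanish hn φ H hH hcpt hγ hα]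
          refine integral_congr_ae ?_
          filter_upwards [hcoe, hcoe2] with x h1 h2
          rw [show ((charL2 γ : L2T n) : Torus n → ℂ) x = char γ x from h1,
            show (((⟨charL2 α, hmem⟩ : hardyT n) : L2T n) : Torus n → ℂ) x = char α x from h2]
      | zero =>
          intro hmem
          have : (⟨(0 : L2T n), hmem⟩ : hardyT n) = 0 := rfl
          rw [this, map_zero]
      | add x y hx hy ihx ihy =>
          intro hmem
          have hxm : x ∈ hardyT n := Submodule.le_topologicalClosure _ hx
          have hym : y ∈ hardyT n := Submodule.le_topologicalClosure _ hy
          have : (⟨x + y, hmem⟩ : hardyT n) = ⟨x, hxm⟩ + ⟨y, hym⟩ := rfl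
          rw [this, map_add, ihx hxm, ihy hym, add_zero]
      | smul c x hx ihx =>
          intro hmem
          have hxm : x ∈ hardyT n := Submodule.le_topologicalClosure _ hx
          have : (⟨c • x, hmem⟩ : hardyT n) = c • ⟨x, hxm⟩ := rfl
          rw [this, ContinuousLinearMap.map_smul, ihx hxm, smul_zero]
    intro f
    -- density
    set S : Set (L2T n) := ((Submodule.span ℂ
        (charL2 '' {α : Fin n → ℤ | ∀ k : Fin n,
          0 ≤ (∑ j ∈ Finset.Iic k, α j) + (k.val : ℤ)}) : Submodule ℂ (L2T n)) : Set (L2T n))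
      with hS
    have hfd : f ∈ closure (((↑) : hardyT n → L2T n) ⁻¹' S) := by
      rw [closure_subtype]
      have himg : (((↑) : hardyT n → L2T n) '' ((((↑) : hardyT n → L2T n)) ⁻¹' S)) = S := by
        ext v
        constructor
        · rintro ⟨w, hw, rfl⟩; exact hw
        · intro hv
          exact ⟨⟨v, Submodule.le_topologicalClosure _ hv⟩, hv, rfl⟩
      rw [himg]
      exact f.2
    have hcl : IsClosed {g : hardyT n | ψ g = 0} := isClosed_eq ψ.continuous continuous_const
    have hsub : (((↑) : hardyT n → L2T n) ⁻¹' S) ⊆ {g : hardyT n | ψ g = 0} := by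
      rintro ⟨v, hmem⟩ hv
      exact hvanish v hv hmem
    have := (closure_minimal hsub hcl) hfd
    exact this
  -- step 2 : conclude H f = 0
  refine ContinuousLinearMap.ext fun f => ?_
  rw [ContinuousLinearMap.zero_apply]
  refine eq_zero_of_inner_char_eq_zero (H f) fun α => ?_
  by_cases hα : Ple α
  · exact (Submodule.mem_orthogonal _ _).mp (hH.1 f) _ (charL2_mem_hardyT hα)
  · exact main2 α hα f

/-- The only compact Hankel operator on `H²(∂_d△ₙ)` is the zero operator. -/
theorem stmt15 {n : ℕ} (hn : 2 ≤ n) (φ : LinfT n)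
    (H : hardyT n →L[ℂ] L2T n) (hH : IsHankelT (⇑φ) H)
    (hcpt : IsCompactOperator H) : H = 0 := by
  -- step 1 : inner ℂ (charL2 γ) (H f) = 0 for all f and all γ with ¬ Ple γ
  have main2 : ∀ γ : Fin n → ℤ, ¬ Ple γ → ∀ f : hardyT n,
      (inner ℂ (charL2 γ) (H f) : ℂ) = 0 := by
    intro γ hγ
    set ψ : hardyT n →L[ℂ] ℂ := (innerSL ℂ (charL2 γ)).comp H with hψ
    have hvanish : ∀ (v : L2T n) (hv : v ∈ Submodule.span ℂ
        (charL2 '' {α : Fin n → ℤ | ∀ k : Fin n,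
          0 ≤ (∑ j ∈ Finset.Iic k, α j) + (k.val : ℤ)}))
        (hmem : v ∈ hardyT n), ψ ⟨v, hmem⟩ = 0 := by
      intro v hv
      induction hv using Submodule.span_induction with
      | mem x hx =>
          intro hmem
          obtain ⟨α, hα, rfl⟩ := hx
          have : ψ ⟨charL2 α, hmem⟩ = inner ℂ (charL2 γ) (H ⟨charL2 α, hmem⟩) := rfl
          rw [this, hH.2 ⟨charL2 α, hmem⟩ (charL2 γ) (charL2_mem_orth hγ)]
          have hcoe := MemLp.coeFn_toLp (char_memLp γ 2)
          have hcoe2 := MemLp.coeFn_toLp (char_memLp α 2)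
          rw [← int_vanish hn φ H hH hcpt hγ hα]
          refine integral_congr_ae ?_
          filter_upwards [hcoe, hcoe2] with x h1 h2
          rw [show ((charL2 γ : L2T n) : Torus n → ℂ) x = char γ x from h1,
            show (((⟨charL2 α, hmem⟩ : hardyT n) : L2T n) : Torus n → ℂ) x = char α x from h2]
      | zero =>
          intro hmem
          have : (⟨(0 : L2T n), hmem⟩ : hardyT n) = 0 := rfl
          rw [this, map_zero]
      | add x y hx hy ihx ihy =>
          intro hmem
          have hxm : x ∈ hardyT n := Submodule.le_topologicalClosure _ hx
          have hym : y ∈ hardyT n := Submodule.le_topologicalClosure _ hy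
          have : (⟨x + y, hmem⟩ : hardyT n) = ⟨x, hxm⟩ + ⟨y, hym⟩ := rfl
          rw [this, map_add, ihx hxm, ihy hym, add_zero]
      | smul c x hx ihx =>
          intro hmem
          have hxm : x ∈ hardyT n := Submodule.le_topologicalClosure _ hx
          have : (⟨c • x, hmem⟩ : hardyT n) = c • ⟨x, hxm⟩ := rfl
          rw [this, ContinuousLinearMap.map_smul, ihx hxm, smul_zero]
    intro f
    -- density
    set S : Set (L2T n) := ((Submodule.span ℂ
        (charL2 '' {α : Fin n → ℤ | ∀ k : Fin n,
          0 ≤ (∑ j ∈ Finset.Iic k, α j) + (k.val : ℤ)}) : Submodule ℂ (L2T n)) : Set (L2T n))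
      with hS
    have hfd : f ∈ closure (((↑) : hardyT n → L2T n) ⁻¹' S) := by
      rw [closure_subtype]
      have himg : (((↑) : hardyT n → L2T n) '' ((((↑) : hardyT n → L2T n)) ⁻¹' S)) = S := by
        ext v
        constructor
        · rintro ⟨w, hw, rfl⟩; exact hw
        · intro hv
          exact ⟨⟨v, Submodule.le_topologicalClosure _ hv⟩, hv, rfl⟩
      rw [himg]
      exact f.2
    have hcl : IsClosed {g : hardyT n | ψ g = 0} := isClosed_eq ψ.continuous continuous_const
    have hsub : (((↑) : hardyT n → L2T n) ⁻¹' S) ⊆ {g : hardyT n | ψ g = 0} := by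
      rintro ⟨v, hmem⟩ hv
      exact hvanish v hv hmem
    have := (closure_minimal hsub hcl) hfd
    exact this
  -- step 2 : conclude H f = 0
  refine ContinuousLinearMap.ext fun f => ?_
  rw [ContinuousLinearMap.zero_apply]
  refine eq_zero_of_inner_char_eq_zero (H f) fun α => ?_
  by_cases hα : Ple α
  · exact (Submodule.mem_orthogonal _ _).mp (hH.1 f) _ (charL2_mem_hardyT hα)
  · exact main2 α hα f
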